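/- Let h ∈ L²(P) be such that h·ε is integrable and E[hε | 𝒢]·(E[ε² | 𝒢])⁻¹·ε ∈ L²(P). Then the element E[hε | 𝒢]·(E[ε² | 𝒢])⁻¹·ε belongs to Λ, and h − E[hε | 𝒢]·(E[ε² | 𝒢])⁻¹·ε is orthogonal in L²(P) to every element of Λ; that is, E[hε | 𝒢]·(E[ε² | 𝒢])⁻¹·ε is the orthogonal projection of h onto Λ. -/

import Mathlib

open MeasureTheory

variable {Ω : Type*}

/-- L² times L² is integrable. -/
lemma l2_mul_integrable {m0 : MeasurableSpace Ω} {μ : Measure Ω} {f g : Ω → ℝ}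
    (hf : MemLp f 2 μ) (hg : MemLp g 2 μ) :
    Integrable (fun ω => f ω * g ω) μ := by
  have : MemLp (f • g) 1 μ := MemLp.smul hg hf
  rw [memLp_one_iff_integrable] at this
  exact this

/-- The subspace `Λ = {g·ε : g 𝒢-measurable with g·ε ∈ L²(P)}`. -/
def LambdaEpsSet {m0 : MeasurableSpace Ω} (μ : Measure Ω) (m : MeasurableSpace Ω)
    (ε : Ω → ℝ) : Set (Ω → ℝ) :=
  {f | ∃ g : Ω → ℝ, StronglyMeasurable[m] g ∧ f = (fun ω => g ω * ε ω) ∧ MemLp f 2 μ}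

/-- projection onto the subspace generated by `ε` over `𝒢`.
Let `(Ω, ℱ, P)` be a probability space, `𝒢 ⊆ ℱ` a sub-σ-algebra, `ε ∈ L²(P)` with
`E[ε² | 𝒢] > 0` a.s.  Let `h ∈ L²(P)` with `hε` integrable and
`E[hε | 𝒢]·(E[ε² | 𝒢])⁻¹·ε ∈ L²(P)`.  Then `E[hε | 𝒢]·(E[ε² | 𝒢])⁻¹·ε` belongs to `Λ`
and `h − E[hε | 𝒢]·(E[ε² | 𝒢])⁻¹·ε` is orthogonal in `L²(P)` to every element of `Λ`;
i.e. it is the orthogonal projection of `h` onto `Λ`. -/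
theorem projection_onto_LambdaEps
    {m0 : MeasurableSpace Ω} (μ : Measure Ω) [IsProbabilityMeasure μ]
    (m : MeasurableSpace Ω) (hm : m ≤ m0)
    (ε : Ω → ℝ) (hε2 : MemLp ε 2 μ)
    (hVpos : ∀ᵐ ω ∂μ, 0 < (μ[(fun ω' => (ε ω')^2)|m]) ω)
    (h : Ω → ℝ) (hh2 : MemLp h 2 μ)
    (hhε : Integrable (fun ω => h ω * ε ω) μ)
    (hL2 : MemLp (fun ω =>
      (μ[(fun ω' => h ω' * ε ω')|m]) ω * ((μ[(fun ω' => (ε ω')^2)|m]) ω)⁻¹ * ε ω) 2 μ) :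
    (fun ω => (μ[(fun ω' => h ω' * ε ω')|m]) ω * ((μ[(fun ω' => (ε ω')^2)|m]) ω)⁻¹ * ε ω)
        ∈ LambdaEpsSet μ m ε ∧
      ∀ f ∈ LambdaEpsSet μ m ε,
        ∫ ω, (h ω - (μ[(fun ω' => h ω' * ε ω')|m]) ω *
          ((μ[(fun ω' => (ε ω')^2)|m]) ω)⁻¹ * ε ω) * f ω ∂μ = 0 := by
  set g : Ω → ℝ := fun ω =>
    (μ[(fun ω' => h ω' * ε ω')|m]) ω * ((μ[(fun ω' => (ε ω')^2)|m]) ω)⁻¹ with hg_def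
  have hg_meas : StronglyMeasurable[m] g :=
    (stronglyMeasurable_condExp.measurable.mul stronglyMeasurable_condExp.measurable.inv).stronglyMeasurable
  have hgε2 : MemLp (fun ω => g ω * ε ω) 2 μ := hL2
  constructor
  · exact ⟨g, hg_meas, rfl, hL2⟩
  · rintro f ⟨g', hg'_meas, rfl, hf2⟩
    -- integrand = g' ω * (h ω * ε ω - g ω * (ε ω * ε ω))
    have hε2int : Integrable (fun ω => (ε ω)^2) μ := by
      have := l2_mul_integrable hε2 hε2
      simpa [sq] using this
    have hgεε_int : Integrable (fun ω => g ω * (ε ω)^2) μ := by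
      have := l2_mul_integrable hgε2 hε2
      refine this.congr (Filter.Eventually.of_forall fun ω => ?_)
      ring
    -- E[g ε² | m] = g E[ε²|m] = E[hε|m] a.e.
    have hpull : μ[(fun ω => g ω * (ε ω)^2)|m] =ᵐ[μ]
        fun ω => g ω * (μ[(fun ω' => (ε ω')^2)|m]) ω := by
      have := condExp_mul_of_stronglyMeasurable_left (μ := μ) hg_meas
        (by simpa [Pi.mul_def] using hgεε_int) hε2int
      simpa [Pi.mul_def] using this
    have hgV : (fun ω => g ω * (μ[(fun ω' => (ε ω')^2)|m]) ω) =ᵐ[μ]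
        μ[(fun ω' => h ω' * ε ω')|m] := by
      filter_upwards [hVpos] with ω hω
      simp only [hg_def]
      field_simp
    -- key: E[w|m] = 0 where w = hε - g ε²
    set w : Ω → ℝ := fun ω => h ω * ε ω - g ω * (ε ω)^2 with hw_def
    have hw_int : Integrable w μ := hhε.sub hgεε_int
    have hEw : μ[w|m] =ᵐ[μ] 0 := by
      have hsub := condExp_sub (μ := μ) (m := m) hhε hgεε_int
      refine (hsub.trans ?_)
      filter_upwards [hpull, hgV] with ω h1 h2
      simp [h1, h2]
    -- g' * w integrable
    have hg'w_int : Integrable (fun ω => g' ω * w ω) μ := by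
      have h1 : Integrable (fun ω => (g' ω * ε ω) * (h ω)) μ :=
        l2_mul_integrable hf2 hh2
      have h2 : Integrable (fun ω => (g' ω * ε ω) * (g ω * ε ω)) μ :=
        l2_mul_integrable hf2 hgε2
      have := h1.sub h2
      refine this.congr (Filter.Eventually.of_forall fun ω => ?_)
      simp only [Pi.sub_apply, hw_def, hg_def]; ring
    have hpull2 : μ[(fun ω => g' ω * w ω)|m] =ᵐ[μ]
        fun ω => g' ω * (μ[w|m]) ω := by
      have := condExp_mul_of_stronglyMeasurable_left (μ := μ) hg'_meas
        (by simpa [Pi.mul_def] using hg'w_int) hw_int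
      simpa [Pi.mul_def] using this
    have hzero : μ[(fun ω => g' ω * w ω)|m] =ᵐ[μ] 0 := by
      refine hpull2.trans ?_
      filter_upwards [hEw] with ω hω
      simp [hω]
    calc ∫ ω, (h ω - g ω * ε ω) * (g' ω * ε ω) ∂μ
        = ∫ ω, g' ω * w ω ∂μ := by
          refine integral_congr_ae (Filter.Eventually.of_forall fun ω => ?_)
          simp only [hw_def]; ring
      _ = ∫ ω, (μ[(fun ω => g' ω * w ω)|m]) ω ∂μ := (integral_condExp hm).symm
      _ = 0 := by
          rw [integral_congr_ae hzero]; simp
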